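/- Fix an integer n ≥ 2. Let C be the (n·(n-1)) × (n-1) matrix, with rows grouped into n consecutive blocks of n rows each and columns indexed by k ∈ {1,…,n-1}, defined as follows: every entry in the first block of n rows equals 1; for each k ∈ {1,…,n-1}, every entry of column k in the (k+1)-st block of n rows equals -1; and all other entries equal 0. Then the (n·(n-1)) × (n·(n-1) + n - 1) block matrix B = [I_{n(n-1)} C], obtained by placing the identity matrix of size n·(n-1) to the left of C, is totally unimodular. -/

import Mathlib

/-- The one-row all-ones matrix is totally unimodular. -/
lemma ones_row_isTotallyUnimodular (m : ℕ) :
    (Matrix.of fun (_ : Unit) (_ : Fin m) => (1 : ℚ)).IsTotallyUnimodular := by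
  intro k f g hf hg
  match k with
  | 0 => exact ⟨1, by simp⟩
  | 1 => exact ⟨1, by simp [Matrix.det_fin_one]⟩
  | k + 2 =>
    exact absurd (hf (Subsingleton.elim (f 0) (f 1))) (by simp [Fin.ext_iff])

/-- The auxiliary matrix `[ones row ; -shifted identity]` is totally unimodular. -/
lemma kmedoid_aux_isTotallyUnimodular (m : ℕ) :
    (Matrix.fromRows
      (Matrix.of fun (_ : Unit) (_ : Fin m) => (1 : ℚ))
      (Matrix.of fun (b k : Fin m) =>
        if (b : ℕ) = (k : ℕ) + 1 then (-1 : ℚ) else 0)).IsTotallyUnimodular := by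
  apply (ones_row_isTotallyUnimodular m).fromRows_unitlike
  intro hne b
  by_cases hb : (b : ℕ) = 0
  · obtain ⟨j⟩ := hne
    refine ⟨j, 0, funext fun k => ?_⟩
    simp [hb, Pi.single_apply]
  · have hblt : (b : ℕ) - 1 < m := by omega
    refine ⟨⟨(b : ℕ) - 1, hblt⟩, -1, funext fun k => ?_⟩
    have hiff : ((b : ℕ) = (k : ℕ) + 1) ↔ k = ⟨(b : ℕ) - 1, hblt⟩ := by
      rw [Fin.ext_iff]
      simp only [Fin.val_mk]
      omega
    simp only [Matrix.of_apply, Pi.single_apply, SignType.coe_neg_one, hiff]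

/-- The reduced constraint matrix `B = [I_{n(n-1)} C]` of the k-medoid relief-centre location
problem is totally unimodular (core of the proof of Theorem 4 of the paper). Here `C` has
`n·(n-1)` rows, grouped into consecutive blocks of `n` rows each (a row is indexed by a pair
`(b, r)` where `b` is the block and `r` the position within the block), and `n-1` columns:
every entry of the first block equals `1`, every entry of column `k` in the `(k+1)`-st block
equals `-1`, and all other entries equal `0`. `B` is obtained by placing the identity matrix of
size `n·(n-1)` to the left of `C`. -/
theorem kmedoid_B_isTotallyUnimodular (n : ℕ) (hn : 2 ≤ n) :
    (Matrix.fromCols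
      (1 : Matrix (Fin (n - 1) × Fin n) (Fin (n - 1) × Fin n) ℚ)
      (Matrix.of fun (br : Fin (n - 1) × Fin n) (k : Fin (n - 1)) =>
        if (br.1 : ℕ) = 0 then (1 : ℚ)
        else if (br.1 : ℕ) = (k : ℕ) + 1 then (-1 : ℚ)
        else 0)).IsTotallyUnimodular := by
  rw [Matrix.one_fromCols_isTotallyUnimodular_iff]
  have key := (kmedoid_aux_isTotallyUnimodular (n - 1)).submatrix
    (fun br : Fin (n - 1) × Fin n =>
      if (br.1 : ℕ) = 0 then Sum.inl () else Sum.inr br.1) (id : Fin (n - 1) → Fin (n - 1))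
  convert key using 1
  ext ⟨b, r⟩ k
  by_cases hb : (b : ℕ) = 0
  · simp [hb, Matrix.submatrix, Matrix.fromRows_apply_inl, Matrix.fromRows_apply_inr]
  · simp [hb, Matrix.submatrix, Matrix.fromRows_apply_inl, Matrix.fromRows_apply_inr]
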